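/- Work in the quaternion algebra over the complex numbers, with complex imaginary unit I and quaternion units i, j, k, and let ω₁ = (−1 + I√3)/2 and ω₂ = (−1 − I√3)/2 be the two primitive cube roots of unity. Set α = 1 + 2i + 4j + 8k, β = 1 + ω₁·i + ω₁²·j + k, and γ = 1 + ω₂·i + ω₂²·j + k. Then for every integer n ≥ 0, JQ^{(3)}_n = (1/7)·[ 2^{n+1}·α − (1 + (2I√3)/3)·ω₁^n·β − (1 − (2I√3)/3)·ω₂^n·γ ], where complex scalars act on quaternions by scalar multiplication. -/

import Mathlib

open Quaternion Complex

/-- Third order Jacobsthal numbers. -/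
def J3 : ℕ → ℤ
  | 0 => 0
  | 1 => 1
  | 2 => 1
  | n + 3 => J3 (n + 2) + J3 (n + 1) + 2 * J3 n

/-- The quaternion unit `i` in the quaternion algebra over `ℂ`. -/
noncomputable def qi : ℍ[ℂ] := ⟨0, 1, 0, 0⟩
/-- The quaternion unit `j` in the quaternion algebra over `ℂ`. -/
noncomputable def qj : ℍ[ℂ] := ⟨0, 0, 1, 0⟩
/-- The quaternion unit `k` in the quaternion algebra over `ℂ`. -/
noncomputable def qk : ℍ[ℂ] := ⟨0, 0, 0, 1⟩

/-- The `n`-th third order Jacobsthal quaternion, viewed in the quaternion algebra over `ℂ`. -/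
noncomputable def JQ (n : ℕ) : ℍ[ℂ] :=
  (J3 n : ℂ) + (J3 (n + 1) : ℂ) * qi + (J3 (n + 2) : ℂ) * qj + (J3 (n + 3) : ℂ) * qk

/-- `ω₁ = (−1 + I√3)/2`, a primitive cube root of unity. -/
noncomputable def ω₁ : ℂ := (-1 + Complex.I * Real.sqrt 3) / 2
/-- `ω₂ = (−1 − I√3)/2`, the other primitive cube root of unity. -/
noncomputable def ω₂ : ℂ := (-1 - Complex.I * Real.sqrt 3) / 2

/-- `α = 1 + 2i + 4j + 8k`. -/
noncomputable def qα : ℍ[ℂ] := 1 + 2 * qi + 4 * qj + 8 * qk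
/-- `β = 1 + ω₁·i + ω₁²·j + k`. -/
noncomputable def qβ : ℍ[ℂ] := 1 + ω₁ • qi + (ω₁ ^ 2) • qj + qk
/-- `γ = 1 + ω₂·i + ω₂²·j + k`. -/
noncomputable def qγ : ℍ[ℂ] := 1 + ω₂ • qi + (ω₂ ^ 2) • qj + qk

lemma hs3 : ((Real.sqrt 3 : ℝ) : ℂ)^2 = 3 := by
  norm_cast
  rw [Real.sq_sqrt]; norm_num

lemma hω₁ : ω₁^2 + ω₁ + 1 = 0 := by
  unfold ω₁
  linear_combination (-1/4 : ℂ)*hs3 + (((Real.sqrt 3:ℝ):ℂ)^2/4)*Complex.I_sq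

lemma hω₂ : ω₂^2 + ω₂ + 1 = 0 := by
  unfold ω₂
  linear_combination (-1/4 : ℂ)*hs3 + (((Real.sqrt 3:ℝ):ℂ)^2/4)*Complex.I_sq

lemma binet (m : ℕ) : (J3 m : ℂ) = (1/7) * (2^(m+1)
    - (1 + 2*Complex.I*Real.sqrt 3/3) * ω₁^m
    - (1 - 2*Complex.I*Real.sqrt 3/3) * ω₂^m) := by
  induction m using Nat.strong_induction_on with
  | _ m ih =>
    match m with
    | 0 =>
      show ((0:ℤ):ℂ) = _
      push_cast
      unfold ω₁ ω₂
      ring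
    | 1 =>
      show ((1:ℤ):ℂ) = _
      push_cast
      unfold ω₁ ω₂
      linear_combination (2*((Real.sqrt 3:ℝ):ℂ)^2/21)*Complex.I_sq - (2/21 : ℂ)*hs3
    | 2 =>
      show ((1:ℤ):ℂ) = _
      push_cast
      unfold ω₁ ω₂
      linear_combination (1/42 : ℂ)*hs3 - (((Real.sqrt 3:ℝ):ℂ)^2/42)*Complex.I_sq
    | (k+3) =>
      rw [show J3 (k+3) = J3 (k+2) + J3 (k+1) + 2 * J3 k from rfl]
      push_cast
      rw [ih (k+2) (by omega), ih (k+1) (by omega), ih k (by omega)]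
      linear_combination ((1/7)*(1 + 2*Complex.I*Real.sqrt 3/3)*ω₁^k*(ω₁-2)) * hω₁
        + ((1/7)*(1 - 2*Complex.I*Real.sqrt 3/3)*ω₂^k*(ω₂-2)) * hω₂

theorem third_order_jacobsthal_quaternion_binet (n : ℕ) :
    JQ n = (1 / 7 : ℂ) •
      ((2 ^ (n + 1) : ℂ) • qα
        - ((1 + 2 * Complex.I * Real.sqrt 3 / 3) * ω₁ ^ n) • qβ
        - ((1 - 2 * Complex.I * Real.sqrt 3 / 3) * ω₂ ^ n) • qγ) := by
  have h1 := binet n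
  have h2 := binet (n+1)
  have h3 := binet (n+2)
  have h4 := binet (n+3)
  unfold JQ qα qβ qγ
  ext <;>
    simp [pow_succ,
      show (2 : ℍ[ℂ]).re = 2 from rfl, show (2 : ℍ[ℂ]).imI = 0 from rfl,
      show (2 : ℍ[ℂ]).imJ = 0 from rfl, show (2 : ℍ[ℂ]).imK = 0 from rfl,
      show (4 : ℍ[ℂ]).re = 4 from rfl, show (4 : ℍ[ℂ]).imI = 0 from rfl,
      show (4 : ℍ[ℂ]).imJ = 0 from rfl, show (4 : ℍ[ℂ]).imK = 0 from rfl,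
      show (8 : ℍ[ℂ]).re = 8 from rfl, show (8 : ℍ[ℂ]).imI = 0 from rfl,
      show (8 : ℍ[ℂ]).imJ = 0 from rfl, show (8 : ℍ[ℂ]).imK = 0 from rfl,
      show qi.re = 0 from rfl, show qi.imI = 1 from rfl, show qi.imJ = 0 from rfl, show qi.imK = 0 from rfl,
      show qj.re = 0 from rfl, show qj.imI = 0 from rfl, show qj.imJ = 1 from rfl, show qj.imK = 0 from rfl,
      show qk.re = 0 from rfl, show qk.imI = 0 from rfl, show qk.imJ = 0 from rfl, show qk.imK = 1 from rfl]
  · linear_combination h1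
  · linear_combination h2
  · linear_combination h3
  · linear_combination h4
      - (1/7)*(1 + 2*Complex.I*Real.sqrt 3/3)*ω₁^n*(ω₁-1)*hω₁
      - (1/7)*(1 - 2*Complex.I*Real.sqrt 3/3)*ω₂^n*(ω₂-1)*hω₂
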